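/- Every permutation on {1,...,n} with at most one consecutive inversion (a 'double ascent') has a nonempty set of associated words over {l, r}: for every double ascent σ there exists a word w ∈ {l,r}⁺ of length n with A(w) = σ, where A is the associated-permutation construction. -/

import Mathlib

/-- The permutation (as the list of values read by position, 0-indexed) associated
with a word over `{l, r}` (encoded `l = true`, `r = false`): the `k`-th letter
determines value `k`, letters `l` forming the first ascending run and letters `r` the
second. -/
def assocPerm (w : List Bool) : List ℕ :=
  ((List.range w.length).filter fun i => w.getD i false) ++
    ((List.range w.length).filter fun i => !(w.getD i false))

/-- The number of consecutive inversions (descents) of a sequence. -/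
def descents (s : List ℕ) : ℕ :=
  (s.zip s.tail).countP fun p => decide (p.2 < p.1)

lemma descents_cons_cons (x y : ℕ) (t : List ℕ) :
    descents (x :: y :: t) = descents (y :: t) + (if y < x then 1 else 0) := by
  simp [descents, List.countP_cons]

lemma chain'_of_descents_eq_zero : ∀ s : List ℕ, descents s = 0 → s.IsChain (· ≤ ·)
  | [], _ => List.isChain_nil
  | [x], _ => List.isChain_singleton x
  | (x :: y :: t), h => by
      rw [descents_cons_cons] at h
      have h1 : descents (y :: t) = 0 := by omega
      have h2 : ¬ y < x := by by_contra hc; simp [hc] at h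
      exact List.isChain_cons_cons.mpr ⟨by omega, chain'_of_descents_eq_zero _ h1⟩

lemma sorted_lt_of_descents (s : List ℕ) (h : descents s = 0) (hnd : s.Nodup) :
    s.Pairwise (· < ·) := by
  have hs : s.Pairwise (· ≤ ·) := List.isChain_iff_pairwise.mp (chain'_of_descents_eq_zero s h)
  exact (hs.and hnd).imp fun ⟨hle, hne⟩ => lt_of_le_of_ne hle hne

lemma split_descents : ∀ s : List ℕ, descents s ≤ 1 →
    ∃ a b, s = a ++ b ∧ descents a = 0 ∧ descents b = 0
  | [], _ => ⟨[], [], rfl, rfl, rfl⟩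
  | [x], _ => ⟨[x], [], by simp, rfl, rfl⟩
  | (x :: y :: t), h => by
      rw [descents_cons_cons] at h
      by_cases hlt : y < x
      · simp [hlt] at h
        exact ⟨[x], y :: t, rfl, rfl, by omega⟩
      · simp [hlt] at h
        obtain ⟨a, b, heq, ha, hb⟩ := split_descents (y :: t) h
        cases a with
        | nil =>
            refine ⟨[x], y :: t, rfl, rfl, ?_⟩
            simpa using heq ▸ hb
        | cons z a' =>
            have hz : z = y := by
              have := congrArg (·.headI) heq
              simpa using this.symm
            refine ⟨x :: z :: a', b, by simp [heq], ?_, hb⟩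
            rw [descents_cons_cons, ha]
            simp [hz, hlt]

lemma filter_range_eq (n : ℕ) (p : ℕ → Bool) (c : List ℕ) (hc : c.Pairwise (· < ·))
    (hmem : ∀ x, x ∈ c ↔ x < n ∧ p x) :
    (List.range n).filter p = c := by
  have h1 : ((List.range n).filter p).Pairwise (· < ·) :=
    List.pairwise_lt_range.filter p
  have hnd1 : ((List.range n).filter p).Nodup := List.nodup_range.filter p
  have hnd2 : c.Nodup := hc.nodup
  apply List.Perm.eq_of_pairwise (fun a b _ _ h1 h2 => absurd (h1.trans h2) (lt_irrefl _)) h1 hc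
  rw [List.perm_ext_iff_of_nodup hnd1 hnd2]
  intro x
  simp [List.mem_filter, hmem, List.mem_range]

/-- Every double ascent (permutation of `{0, …, n-1}` with at most one
consecutive inversion) has a nonempty set of associated words: it is `assocPerm w`
for some word `w` over `{l, r}` of length `n`. -/
theorem stmt15 (n : ℕ) (hn : 1 ≤ n) (σ : List ℕ)
    (hperm : σ.Perm (List.range n)) (hda : descents σ ≤ 1) :
    ∃ w : List Bool, w.length = n ∧ assocPerm w = σ := by
  obtain ⟨a, b, heq, ha, hb⟩ := split_descents σ hda
  subst heq
  have hnd : (a ++ b).Nodup := hperm.nodup_iff.mpr List.nodup_range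
  obtain ⟨hnda, hndb, hdisj⟩ := List.nodup_append.mp hnd
  have hmemσ : ∀ x, x ∈ a ++ b ↔ x < n := by
    intro x; rw [hperm.mem_iff, List.mem_range]
  have hsa := sorted_lt_of_descents a ha hnda
  have hsb := sorted_lt_of_descents b hb hndb
  refine ⟨(List.range n).map (fun i => decide (i ∈ a)), by simp, ?_⟩
  have hlen : ((List.range n).map (fun i => decide (i ∈ a))).length = n := by simp
  have hgetD : ∀ i ∈ List.range n,
      ((List.range n).map (fun i => decide (i ∈ a))).getD i false = decide (i ∈ a) := by
    intro i hi
    rw [List.mem_range] at hi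
    rw [List.getD_eq_getElem _ _ (by simpa using hi)]
    simp
  unfold assocPerm
  rw [hlen]
  have e1 : (List.range n).filter
      (fun i => ((List.range n).map (fun i => decide (i ∈ a))).getD i false) = a := by
    rw [List.filter_congr hgetD]
    apply filter_range_eq n _ a hsa
    intro x
    constructor
    · intro hx
      exact ⟨(hmemσ x).mp (List.mem_append_left b hx), by simpa using hx⟩
    · rintro ⟨-, hx⟩; simpa using hx
  have e2 : (List.range n).filter
      (fun i => !((List.range n).map (fun i => decide (i ∈ a))).getD i false) = b := by
    rw [List.filter_congr (fun i hi => by rw [hgetD i hi])]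
    apply filter_range_eq n _ b hsb
    intro x
    constructor
    · intro hx
      refine ⟨(hmemσ x).mp (List.mem_append_right a hx), ?_⟩
      simp only [Bool.not_eq_true', decide_eq_false_iff_not]
      intro hxa; exact hdisj x hxa x hx rfl
    · rintro ⟨hxn, hx⟩
      simp only [Bool.not_eq_true', decide_eq_false_iff_not] at hx
      rcases List.mem_append.mp ((hmemσ x).mpr hxn) with h | h
      · exact absurd h hx
      · exact h
  rw [e1, e2]
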